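/- Let p be a prime and f : R → A a flat homomorphism of F_p-algebras such that the relative Frobenius F_{A/R} is an isomorphism. Then A is formally étale over R: for every R-algebra C with ideal b ⊆ C satisfying b² = 0 and every R-algebra map A → C/b, there exists a unique R-algebra lift A → C. -/

import Mathlib

open TensorProduct

/-- `FStar p R` is `R` viewed as an `R`-algebra via the Frobenius `r ↦ r ^ p`. -/
def FStar (_p : ℕ) (R : Type*) : Type _ := R

instance (p : ℕ) (R : Type*) [CommRing R] : CommRing (FStar p R) :=
  inferInstanceAs (CommRing R)

noncomputable instance (p : ℕ) (R A : Type*) [CommRing R] [CommRing A] [Algebra R A]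
    [ExpChar A p] : Algebra R (FStar p A) :=
  ((frobenius A p).comp (algebraMap R A)).toAlgebra

/-- Frobenius of `A`, as a map `A →ₐ[R] FStar p A`. -/
noncomputable def frobAlgHom (p : ℕ) (R A : Type*) [CommRing R] [CommRing A] [Algebra R A]
    [ExpChar A p] : A →ₐ[R] FStar p A :=
  { frobenius A p with commutes' := fun _ => rfl }

/-- The structure map `F_*R → F_*A`, as a map of `R`-algebras. -/
noncomputable def fstarAlgHom (p : ℕ) (R A : Type*) [CommRing R] [CommRing A] [Algebra R A]
    [ExpChar R p] [ExpChar A p] : FStar p R →ₐ[R] FStar p A :=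
  { (algebraMap R A : R →+* A) with
    commutes' := fun r => by
      show (algebraMap R A) (frobenius R p (algebraMap R R r)) = frobenius A p (algebraMap R A r)
      simp [frobenius_def, map_pow] }

/-- The relative Frobenius `A ⊗[R] F_*R → F_*A`, `a ⊗ r ↦ a^p · r`. -/
noncomputable def relFrob (p : ℕ) (R A : Type*) [CommRing R] [CommRing A] [Algebra R A]
    [ExpChar R p] [ExpChar A p] : (A ⊗[R] FStar p R) →ₐ[R] FStar p A :=
  Algebra.TensorProduct.productMap (frobAlgHom p R A) (fstarAlgHom p R A)

section Aux

variable {p : ℕ} [Fact p.Prime]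

lemma aux_charP_of_algebra {R B : Type*} [CommRing R] [CommRing B] [Algebra R B]
    [CharP R p] [Nontrivial B] : CharP B p := by
  have : (p : B) = 0 := by
    rw [← map_natCast (algebraMap R B) p, CharP.cast_eq_zero R p, map_zero]
  exact (CharP.charP_iff_prime_eq_zero Fact.out).mpr this

lemma aux_pow_eq {B : Type*} [CommRing B] [CharP B p] (x ε : B) (hε : ε * ε = 0) :
    (x + ε) ^ p = x ^ p := by
  haveI : ExpChar B p := .prime Fact.out
  rw [add_pow_char]
  have : ε ^ p = 0 := by
    have h2 : 2 ≤ p := (Fact.out : p.Prime).two_le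
    calc ε ^ p = ε ^ 2 * ε ^ (p - 2) := by rw [← pow_add]; congr 1; omega
      _ = 0 := by rw [sq, hε, zero_mul]
  rw [this, add_zero]

/-- Uniqueness of lifts, from surjectivity of the relative Frobenius. -/
lemma aux_unique {R A : Type*} [CommRing R] [CommRing A] [Algebra R A]
    [CharP R p] [CharP A p]
    (hsurj : Function.Surjective (relFrob p R A))
    {B : Type*} [CommRing B] [Algebra R B] (I : Ideal B) (hI : I ^ 2 = ⊥)
    (g₁ g₂ : A →ₐ[R] B)
    (h : (Ideal.Quotient.mkₐ R I).comp g₁ = (Ideal.Quotient.mkₐ R I).comp g₂) :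
    g₁ = g₂ := by
  cases subsingleton_or_nontrivial B with
  | inl hB => ext a; exact Subsingleton.elim _ _
  | inr hB =>
    haveI : CharP B p := aux_charP_of_algebra (R := R)
    have key : ∀ a : A, g₁ a - g₂ a ∈ I := by
      intro a
      have := AlgHom.congr_fun h a
      simpa [Ideal.Quotient.mkₐ_eq_mk, Ideal.Quotient.eq] using this
    have hpow : ∀ a : A, g₁ (a ^ p) = g₂ (a ^ p) := by
      intro a
      have hmem := key a
      have hsq : (g₁ a - g₂ a) * (g₁ a - g₂ a) = 0 := by
        have : (g₁ a - g₂ a) * (g₁ a - g₂ a) ∈ I ^ 2 := by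
          rw [sq]; exact Ideal.mul_mem_mul hmem hmem
        simpa [hI] using this
      have : g₁ a = g₂ a + (g₁ a - g₂ a) := by ring
      rw [map_pow, map_pow, this, aux_pow_eq _ _ hsq]
    ext a
    obtain ⟨x, hx⟩ := hsurj (a : FStar p A)
    suffices H : ∀ x : A ⊗[R] FStar p R, g₁ (relFrob p R A x) = g₂ (relFrob p R A x) by
      have := H x
      rw [hx] at this
      exact this
    intro x
    induction x using TensorProduct.induction_on with
    | zero =>
      simp [map_zero (relFrob p R A)]
      exact (map_zero g₁).trans (map_zero g₂).symm
    | tmul a r =>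
      have : (relFrob p R A (a ⊗ₜ[R] r) : A) = a ^ p * algebraMap R A r := rfl
      rw [this, map_mul, map_mul, hpow, g₁.commutes (r : R), g₂.commutes (r : R)]
    | add x y hx hy =>
      rw [map_add (relFrob p R A)]
      exact (map_add g₁ _ _).trans ((congrArg₂ (· + ·) hx hy).trans (map_add g₂ _ _).symm)

end Aux

section Exist
variable {p : ℕ} [Fact p.Prime]

lemma aux_exists {R A : Type*} [CommRing R] [CommRing A] [Algebra R A]
    [CharP R p] [CharP A p]
    (hbij : Function.Bijective (relFrob p R A))
    {B : Type*} [CommRing B] [Algebra R B] (I : Ideal B) (hI : I ^ 2 = ⊥)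
    (φ : A →ₐ[R] B ⧸ I) :
    ∃ g : A →ₐ[R] B, (Ideal.Quotient.mkₐ R I).comp g = φ := by
  cases subsingleton_or_nontrivial B with
  | inl hB =>
    refine ⟨⟨⟨⟨⟨fun _ => 0, Subsingleton.elim _ _⟩, fun _ _ => Subsingleton.elim _ _⟩,
      Subsingleton.elim _ _, fun _ _ => Subsingleton.elim _ _⟩, fun _ => Subsingleton.elim _ _⟩, ?_⟩
    haveI : Subsingleton (B ⧸ I) := Ideal.Quotient.mk_surjective.subsingleton
    ext a
    exact Subsingleton.elim _ _
  | inr hB =>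
    haveI : CharP B p := aux_charP_of_algebra (R := R)
    haveI : ExpChar B p := .prime Fact.out
    haveI : Nontrivial R := (algebraMap R B).domain_nontrivial
    -- the Frobenius kills I, so it factors through B ⧸ I
    have hFr : ∀ b ∈ I, frobenius B p b = 0 := by
      intro b hb
      have hb2 : b ^ 2 = 0 := by
        have : b ^ 2 ∈ I ^ 2 := Ideal.pow_mem_pow hb 2
        simpa [hI] using this
      have h2 : 2 ≤ p := (Fact.out : p.Prime).two_le
      calc frobenius B p b = b ^ p := frobenius_def ..
        _ = b ^ 2 * b ^ (p - 2) := by rw [← pow_add]; congr 1; omega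
        _ = 0 := by rw [hb2, zero_mul]
    set Fbar : B ⧸ I →+* B := Ideal.Quotient.lift I (frobenius B p) hFr with hFbar_def
    have hFbar : ∀ b : B, Fbar (Ideal.Quotient.mk I b) = b ^ p := fun b => by
      simp [hFbar_def, frobenius_def]
    -- ψ₁ : A →ₐ[R] FStar p B
    set ψ₁ : A →ₐ[R] FStar p B :=
      { toRingHom := Fbar.comp φ.toRingHom
        commutes' := fun r => by
          show Fbar (φ (algebraMap R A r)) = frobenius B p (algebraMap R B r)
          rw [AlgHom.commutes, IsScalarTower.algebraMap_apply R B (B ⧸ I),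
            Ideal.Quotient.algebraMap_eq, hFbar, frobenius_def] } with hψ₁_def
    set H : (A ⊗[R] FStar p R) →ₐ[R] FStar p B :=
      Algebra.TensorProduct.productMap ψ₁ (fstarAlgHom p R B) with hH_def
    set e : (A ⊗[R] FStar p R) ≃ₐ[R] FStar p A := AlgEquiv.ofBijective (relFrob p R A) hbij
      with he_def
    have he : ∀ x, e x = relFrob p R A x := fun _ => rfl
    -- the lift
    set G : FStar p A →ₐ[R] FStar p B := H.comp (e.symm : FStar p A →ₐ[R] A ⊗[R] FStar p R)
      with hG_def
    have hG : ∀ x : A ⊗[R] FStar p R, (G (relFrob p R A x) : B) = H x := by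
      intro x
      show H (e.symm (e x)) = H x
      rw [AlgEquiv.symm_apply_apply]
    refine ⟨{ toRingHom := (G.toRingHom : A →+* B)
              commutes' := fun r => ?_ }, ?_⟩
    · show (G (algebraMap R A r) : B) = algebraMap R B r
      have h1 : relFrob p R A ((1:A) ⊗ₜ[R] r) = algebraMap R A r := by
        show (1:A) ^ p * algebraMap R A r = _
        rw [one_pow, one_mul]
      rw [← h1, hG]
      show Fbar (φ 1) * algebraMap R B r = algebraMap R B r
      rw [map_one, map_one, one_mul]
    · ext a
      show (Ideal.Quotient.mk I) (G a) = φ a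
      obtain ⟨x, hx⟩ := hbij.2 (a : FStar p A)
      suffices Hx : ∀ x : A ⊗[R] FStar p R,
          (Ideal.Quotient.mk I) (G (relFrob p R A x) : B) = φ (relFrob p R A x) by
        have := Hx x
        rw [hx] at this
        exact this
      intro x
      induction x using TensorProduct.induction_on with
      | zero =>
        simp [map_zero (relFrob p R A), map_zero G]
        exact (map_zero (Ideal.Quotient.mk I)).trans (map_zero φ).symm
      | tmul a r =>
        rw [hG]
        have hHt : (H (a ⊗ₜ[R] r) : B) = Fbar (φ a) * algebraMap R B r := rfl
        have hrel : (relFrob p R A (a ⊗ₜ[R] r) : A) = a ^ p * algebraMap R A r := rfl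
        rw [hHt, hrel, map_mul, map_mul, map_pow, φ.commutes (r : R),
          IsScalarTower.algebraMap_apply R B (B ⧸ I) (r : R), Ideal.Quotient.algebraMap_eq]
        congr 1
        obtain ⟨c, hc⟩ := Ideal.Quotient.mk_surjective (φ a)
        rw [← hc, hFbar, map_pow]
      | add x y hx hy =>
        rw [map_add (relFrob p R A), map_add G]
        exact (map_add (Ideal.Quotient.mk I) _ _).trans ((congrArg₂ (· + ·) hx hy).trans (map_add φ _ _).symm)

end Exist

/-- a flat homomorphism of `𝔽_p`-algebras whose relative Frobenius is an
isomorphism is formally étale. -/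
theorem stmt_18.{u} (p : ℕ) [Fact p.Prime] (R A : Type u) [CommRing R] [CommRing A] [Algebra R A]
    [CharP R p] [CharP A p]
    (hflat : Module.Flat R A)
    (hbij : Function.Bijective (relFrob p R A)) :
    Algebra.FormallyEtale R A := by
  rw [Algebra.FormallyEtale.iff_formallyUnramified_and_formallySmooth]
  constructor
  · rw [Algebra.FormallyUnramified.iff_comp_injective]
    intro B _ _ I hI
    intro g₁ g₂ h
    exact aux_unique hbij.2 I hI g₁ g₂ h
  · apply Algebra.FormallySmooth.of_comp_surjective
    intro B _ _ I hI φ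
    exact aux_exists hbij I hI φ
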